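/- With the notation of the context, if neither 0 < ((λ₁+λ₂)/(1+λ₁λ₂))·β < α < β nor β < α ≤ ((λ₁+λ₂)/(1+λ₁λ₂))·β < 0 holds, then Φ(1) ∈ (−π, π]. (This is case '0' of Lemma 2.8: for lifts A, B of τ_{∞,0}(λ₁), τ_{α,β}(λ₂) to the m-fold covering group of PSL(2,ℝ), lev_m(A·B) − lev_m(A) − lev_m(B) = 0.) -/

import Mathlib

set_option maxHeartbeats 1000000

/-- `λ(t) = 1 + t(λ−1)`, deforming the shift parameter from `1` to `λ`. -/
noncomputable def lamt (l t : ℝ) : ℝ := 1 + t * (l - 1)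

/-- The hyperbolic element `τ_{∞,0}(λ₁(t))` of `SL(2,ℝ)` as a matrix. -/
noncomputable def matA (l1 t : ℝ) : Matrix (Fin 2) (Fin 2) ℝ :=
  !![Real.sqrt (lamt l1 t), 0; 0, (Real.sqrt (lamt l1 t))⁻¹]

/-- The hyperbolic element `τ_{α,β}(λ₂(t))` of `SL(2,ℝ)` with fixed points `α`, `β`. -/
noncomputable def matB (l2 α β t : ℝ) : Matrix (Fin 2) (Fin 2) ℝ :=
  ((α - β) * Real.sqrt (lamt l2 t))⁻¹ •
    !![lamt l2 t * α - β, -((lamt l2 t - 1) * α * β);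
       lamt l2 t - 1, α - lamt l2 t * β]

/-- The product path `M(t) = A(t)·B(t)`. -/
noncomputable def matM (l1 l2 α β t : ℝ) : Matrix (Fin 2) (Fin 2) ℝ :=
  matA l1 t * matB l2 α β t

/-- `w(t) = (a(t)+d(t)) + i(b(t)−c(t))`. -/
noncomputable def wfun (l1 l2 α β t : ℝ) : ℂ :=
  ((matM l1 l2 α β t 0 0 + matM l1 l2 α β t 1 1 : ℝ) : ℂ) +
    Complex.I * ((matM l1 l2 α β t 0 1 - matM l1 l2 α β t 1 0 : ℝ) : ℂ)

/-- numerator of the real part of `w(t)` -/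
noncomputable def efun (l1 l2 α β t : ℝ) : ℝ :=
  (α * (1 + lamt l1 t * lamt l2 t) - β * (lamt l1 t + lamt l2 t)) * (α - β)

/-- negated numerator of the imaginary part of `w(t)` -/
noncomputable def ffun (l1 l2 α β t : ℝ) : ℝ :=
  (lamt l2 t - 1) * (lamt l1 t * α * β + 1) * (α - β)

/-- common (positive) denominator -/
noncomputable def sfun (l1 l2 α β t : ℝ) : ℝ :=
  (α - β) ^ 2 * (Real.sqrt (lamt l1 t) * Real.sqrt (lamt l2 t))

lemma lamt_pos {l : ℝ} (hl : 1 < l) {t : ℝ} (ht : t ∈ Set.Icc (0:ℝ) 1) : 0 < lamt l t := by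
  obtain ⟨h0, h1⟩ := ht
  simp only [lamt]
  nlinarith [mul_nonneg h0 (by linarith : (0:ℝ) ≤ l - 1)]

lemma sfun_pos {l1 l2 α β t : ℝ} (hαβ : α ≠ β) (h1 : 0 < lamt l1 t) (h2 : 0 < lamt l2 t) :
    0 < sfun l1 l2 α β t := by
  have hd : α - β ≠ 0 := sub_ne_zero.2 hαβ
  have hsq : 0 < (α - β) ^ 2 := lt_of_le_of_ne (sq_nonneg _) (Ne.symm (pow_ne_zero 2 hd))
  exact mul_pos hsq (mul_pos (Real.sqrt_pos.2 h1) (Real.sqrt_pos.2 h2))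

lemma matM_trace (l1 l2 α β t : ℝ) (hαβ : α ≠ β) (h1 : 0 < lamt l1 t) (h2 : 0 < lamt l2 t) :
    matM l1 l2 α β t 0 0 + matM l1 l2 α β t 1 1 = efun l1 l2 α β t / sfun l1 l2 α β t := by
  have hd : α - β ≠ 0 := sub_ne_zero.2 hαβ
  simp only [efun, sfun]
  obtain ⟨s1, hs1, hq1⟩ : ∃ s, 0 < s ∧ lamt l1 t = s * s :=
    ⟨Real.sqrt (lamt l1 t), Real.sqrt_pos.2 h1, (Real.mul_self_sqrt h1.le).symm⟩
  obtain ⟨s2, hs2, hq2⟩ : ∃ s, 0 < s ∧ lamt l2 t = s * s :=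
    ⟨Real.sqrt (lamt l2 t), Real.sqrt_pos.2 h2, (Real.mul_self_sqrt h2.le).symm⟩
  simp only [matM, matA, matB, hq1, hq2, Real.sqrt_mul_self hs1.le, Real.sqrt_mul_self hs2.le]
  simp [Matrix.mul_apply, Fin.sum_univ_two]
  field_simp
  ring

lemma matM_anti (l1 l2 α β t : ℝ) (hαβ : α ≠ β) (h1 : 0 < lamt l1 t) (h2 : 0 < lamt l2 t) :
    matM l1 l2 α β t 0 1 - matM l1 l2 α β t 1 0
      = -ffun l1 l2 α β t / sfun l1 l2 α β t := by
  have hd : α - β ≠ 0 := sub_ne_zero.2 hαβ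
  simp only [ffun, sfun]
  obtain ⟨s1, hs1, hq1⟩ : ∃ s, 0 < s ∧ lamt l1 t = s * s :=
    ⟨Real.sqrt (lamt l1 t), Real.sqrt_pos.2 h1, (Real.mul_self_sqrt h1.le).symm⟩
  obtain ⟨s2, hs2, hq2⟩ : ∃ s, 0 < s ∧ lamt l2 t = s * s :=
    ⟨Real.sqrt (lamt l2 t), Real.sqrt_pos.2 h2, (Real.mul_self_sqrt h2.le).symm⟩
  simp only [matM, matA, matB, hq1, hq2, Real.sqrt_mul_self hs1.le, Real.sqrt_mul_self hs2.le]
  simp [Matrix.mul_apply, Fin.sum_univ_two]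
  field_simp
  ring

lemma wfun_eq (l1 l2 α β t : ℝ) (hαβ : α ≠ β) (h1 : 0 < lamt l1 t) (h2 : 0 < lamt l2 t) :
    wfun l1 l2 α β t
      = ((efun l1 l2 α β t / sfun l1 l2 α β t : ℝ) : ℂ) +
        Complex.I * ((-ffun l1 l2 α β t / sfun l1 l2 α β t : ℝ) : ℂ) := by
  rw [wfun, matM_trace _ _ _ _ _ hαβ h1 h2, matM_anti _ _ _ _ _ hαβ h1 h2]

lemma wfun_re (l1 l2 α β t : ℝ) (hαβ : α ≠ β) (h1 : 0 < lamt l1 t) (h2 : 0 < lamt l2 t) :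
    (wfun l1 l2 α β t).re = efun l1 l2 α β t / sfun l1 l2 α β t := by
  rw [wfun_eq _ _ _ _ _ hαβ h1 h2]; simp

lemma wfun_im (l1 l2 α β t : ℝ) (hαβ : α ≠ β) (h1 : 0 < lamt l1 t) (h2 : 0 < lamt l2 t) :
    (wfun l1 l2 α β t).im = -ffun l1 l2 α β t / sfun l1 l2 α β t := by
  rw [wfun_eq _ _ _ _ _ hαβ h1 h2]; simp
lemma key_core (l1 l2 α β A B : ℝ) (hl1 : 1 < l1) (hl2 : 1 < l2)
    (hα : α ≠ 0) (hβ : β ≠ 0) (hαβ : α ≠ β)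
    (hcase₁ : ¬(0 < (l1 + l2) / (1 + l1 * l2) * β ∧
      (l1 + l2) / (1 + l1 * l2) * β < α ∧ α < β))
    (hcase₂ : ¬(β < α ∧ α ≤ (l1 + l2) / (1 + l1 * l2) * β ∧
      (l1 + l2) / (1 + l1 * l2) * β < 0))
    (hA1 : 1 ≤ A) (hB1 : 1 ≤ B) (hAl : A ≤ l1) (hBl : B ≤ l2) (himp : B = 1 → A = 1) :
    0 ≤ (α * (1 + A * B) - β * (A + B)) * (α - β) ∧
      ((α * (1 + A * B) - β * (A + B)) * (α - β) = 0 →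
        (B - 1) * (A * α * β + 1) * (α - β) < 0) := by
  have hPQ : A + B ≤ 1 + A * B := by nlinarith
  have hden : (0:ℝ) < 1 + l1 * l2 := by nlinarith
  have hkey : (l1 + l2) * (1 + A * B) ≤ (A + B) * (1 + l1 * l2) := by
    nlinarith [mul_nonneg (sub_nonneg.2 hAl) (by nlinarith : (0:ℝ) ≤ l2 * B - 1),
      mul_nonneg (sub_nonneg.2 hBl) (by nlinarith : (0:ℝ) ≤ l1 * A - 1)]
  rcases hαβ.lt_or_gt with hab | hab
  · -- α < β
    rcases hβ.lt_or_gt with hb | hb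
    · -- β < 0
      have hE : 0 < (α * (1 + A * B) - β * (A + B)) * (α - β) := by
        have h1 : α * (1 + A * B) - β * (A + B) < 0 := by nlinarith
        nlinarith [mul_pos_of_neg_of_neg h1 (show α - β < 0 by linarith)]
      exact ⟨hE.le, fun h => absurd h (ne_of_gt hE)⟩
    · -- 0 < β
      rcases lt_or_ge α 0 with ha | ha
      · have hE : 0 < (α * (1 + A * B) - β * (A + B)) * (α - β) := by
          have h1 : α * (1 + A * B) - β * (A + B) < 0 := by nlinarith
          nlinarith [mul_pos_of_neg_of_neg h1 (show α - β < 0 by linarith)]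
        exact ⟨hE.le, fun h => absurd h (ne_of_gt hE)⟩
      · have ha' : 0 < α := ha.lt_of_ne' hα
        have hc1pos : 0 < (l1 + l2) / (1 + l1 * l2) * β := by positivity
        have hY : ¬ ((l1 + l2) / (1 + l1 * l2) * β < α) :=
          fun hY => hcase₁ ⟨hc1pos, hY, hab⟩
        push_neg at hY
        have halc : α * (1 + l1 * l2) ≤ (l1 + l2) * β := by
          rw [div_mul_eq_mul_div, le_div_iff₀ hden] at hY
          linarith
        have hNP : α * (1 + A * B) ≤ β * (A + B) := by
          have h3 : α * (1 + A * B) * (1 + l1 * l2) ≤ β * (A + B) * (1 + l1 * l2) := by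
            have hx : β * ((l1 + l2) * (1 + A * B)) ≤ β * ((A + B) * (1 + l1 * l2)) :=
              mul_le_mul_of_nonneg_left hkey hb.le
            have hy : α * (1 + l1 * l2) * (1 + A * B) ≤ (l1 + l2) * β * (1 + A * B) :=
              mul_le_mul_of_nonneg_right halc (by nlinarith)
            linarith [hx, hy]
          exact le_of_mul_le_mul_right h3 hden
        refine ⟨by nlinarith, fun hE0 => ?_⟩
        have heq : α * (1 + A * B) = β * (A + B) := by
          rcases mul_eq_zero.1 hE0 with h | h
          · linarith [sub_eq_zero.1 h]
          · exact absurd (sub_eq_zero.1 h) hαβ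
        have hBgt : 1 < B := by
          rcases eq_or_lt_of_le hB1 with hB1' | hB1'
          · exfalso
            have hAone : A = 1 := himp hB1'.symm
            rw [hAone, ← hB1'] at heq
            apply hαβ; nlinarith
          · exact hB1'
        have hpos : (0:ℝ) < A * α * β + 1 := by
          nlinarith [mul_pos (mul_pos (show (0:ℝ) < A by linarith) ha') hb]
        exact mul_neg_of_pos_of_neg (mul_pos (by linarith) hpos) (by linarith)
  · -- β < α
    rcases hβ.lt_or_gt with hb | hb
    · -- β < 0
      rcases lt_or_ge 0 α with ha | ha
      · have hE : 0 < (α * (1 + A * B) - β * (A + B)) * (α - β) := by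
          have h1 : 0 < α * (1 + A * B) - β * (A + B) := by nlinarith
          nlinarith [mul_pos h1 (show 0 < α - β by linarith)]
        exact ⟨hE.le, fun h => absurd h (ne_of_gt hE)⟩
      · have ha' : α < 0 := ha.lt_of_ne hα
        have hc1neg : (l1 + l2) / (1 + l1 * l2) * β < 0 := by
          apply mul_neg_of_pos_of_neg _ hb
          positivity
        have hY : ¬ (α ≤ (l1 + l2) / (1 + l1 * l2) * β) :=
          fun hY => hcase₂ ⟨hab, hY, hc1neg⟩
        push_neg at hY
        have halc : (l1 + l2) * β < α * (1 + l1 * l2) := by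
          rw [div_mul_eq_mul_div, div_lt_iff₀ hden] at hY
          linarith
        have hNP : β * (A + B) < α * (1 + A * B) := by
          have h3 : β * (A + B) * (1 + l1 * l2) < α * (1 + A * B) * (1 + l1 * l2) := by
            have hx : β * ((A + B) * (1 + l1 * l2)) ≤ β * ((l1 + l2) * (1 + A * B)) :=
              mul_le_mul_of_nonpos_left hkey hb.le
            have hy : (l1 + l2) * β * (1 + A * B) < α * (1 + l1 * l2) * (1 + A * B) :=
              mul_lt_mul_of_pos_right halc (by nlinarith)
            linarith [hx, hy]
          exact lt_of_mul_lt_mul_right h3 hden.le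
        have hE : 0 < (α * (1 + A * B) - β * (A + B)) * (α - β) := by
          nlinarith [mul_pos (show 0 < α * (1 + A * B) - β * (A + B) by linarith)
            (show 0 < α - β by linarith)]
        exact ⟨hE.le, fun h => absurd h (ne_of_gt hE)⟩
    · -- 0 < β < α
      have hE : 0 < (α * (1 + A * B) - β * (A + B)) * (α - β) := by
        have h1 : 0 < α * (1 + A * B) - β * (A + B) := by nlinarith
        nlinarith [mul_pos h1 (show 0 < α - β by linarith)]
      exact ⟨hE.le, fun h => absurd h (ne_of_gt hE)⟩

lemma key_sign (l1 l2 α β : ℝ) (hl1 : 1 < l1) (hl2 : 1 < l2)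
    (hα : α ≠ 0) (hβ : β ≠ 0) (hαβ : α ≠ β)
    (hcase₁ : ¬(0 < (l1 + l2) / (1 + l1 * l2) * β ∧
      (l1 + l2) / (1 + l1 * l2) * β < α ∧ α < β))
    (hcase₂ : ¬(β < α ∧ α ≤ (l1 + l2) / (1 + l1 * l2) * β ∧
      (l1 + l2) / (1 + l1 * l2) * β < 0))
    {t : ℝ} (ht : t ∈ Set.Icc (0:ℝ) 1) :
    0 ≤ efun l1 l2 α β t ∧
      (efun l1 l2 α β t = 0 → ffun l1 l2 α β t < 0) := by
  obtain ⟨ht0, ht1⟩ := ht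
  simp only [efun, ffun]
  refine key_core l1 l2 α β _ _ hl1 hl2 hα hβ hαβ hcase₁ hcase₂ ?_ ?_ ?_ ?_ ?_
  · simp only [lamt]; nlinarith
  · simp only [lamt]; nlinarith
  · simp only [lamt]; nlinarith
  · simp only [lamt]; nlinarith
  · intro hB
    simp only [lamt] at hB ⊢
    have h' : t * (l2 - 1) = 0 := by linarith
    rcases mul_eq_zero.1 h' with h | h
    · rw [h]; ring
    · exfalso; linarith

/-- Case `0` of Lemma 2.8: if neither `0 < ((λ₁+λ₂)/(1+λ₁λ₂))·β < α < β` nor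
`β < α ≤ ((λ₁+λ₂)/(1+λ₁λ₂))·β < 0` holds, then `Φ(1) ∈ (−π, π]`. -/
theorem lemma28_case_zero (l1 l2 α β : ℝ) (hl1 : 1 < l1) (hl2 : 1 < l2)
    (hα : α ≠ 0) (hβ : β ≠ 0) (hαβ : α ≠ β)
    (Φ : ℝ → ℝ) (hΦc : ContinuousOn Φ (Set.Icc 0 1)) (hΦ0 : Φ 0 = 0)
    (hΦ : ∀ t ∈ Set.Icc (0 : ℝ) 1,
      Complex.exp (Complex.I * (Φ t : ℂ))
        = (wfun l1 l2 α β t / (‖wfun l1 l2 α β t‖ : ℂ)) ^ 2)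
    (hcase₁ : ¬(0 < (l1 + l2) / (1 + l1 * l2) * β ∧
      (l1 + l2) / (1 + l1 * l2) * β < α ∧ α < β))
    (hcase₂ : ¬(β < α ∧ α ≤ (l1 + l2) / (1 + l1 * l2) * β ∧
      (l1 + l2) / (1 + l1 * l2) * β < 0)) :
    Φ 1 ∈ Set.Ioc (-Real.pi) Real.pi := by
  have hL1 : ∀ t ∈ Set.Icc (0:ℝ) 1, 0 < lamt l1 t := fun t ht => lamt_pos hl1 ht
  have hL2 : ∀ t ∈ Set.Icc (0:ℝ) 1, 0 < lamt l2 t := fun t ht => lamt_pos hl2 ht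
  have hkey : ∀ t ∈ Set.Icc (0:ℝ) 1, 0 ≤ efun l1 l2 α β t ∧
      (efun l1 l2 α β t = 0 → ffun l1 l2 α β t < 0) :=
    fun t ht => key_sign l1 l2 α β hl1 hl2 hα hβ hαβ hcase₁ hcase₂ ht
  have hS : ∀ t ∈ Set.Icc (0:ℝ) 1, 0 < sfun l1 l2 α β t :=
    fun t ht => sfun_pos hαβ (hL1 t ht) (hL2 t ht)
  -- slit plane membership
  have hslit : ∀ t ∈ Set.Icc (0:ℝ) 1, wfun l1 l2 α β t ∈ Complex.slitPlane := by
    intro t ht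
    rw [Complex.mem_slitPlane_iff, wfun_re _ _ _ _ _ hαβ (hL1 t ht) (hL2 t ht),
      wfun_im _ _ _ _ _ hαβ (hL1 t ht) (hL2 t ht)]
    obtain ⟨hE, hEF⟩ := hkey t ht
    rcases eq_or_lt_of_le hE with h0 | hpos
    · right
      have hF := hEF h0.symm
      exact ne_of_gt (div_pos (by linarith) (hS t ht))
    · left
      exact div_pos hpos (hS t ht)
  -- continuity of wfun on [0,1]
  have hEc : Continuous (efun l1 l2 α β) := by
    unfold efun lamt; fun_prop
  have hFc : Continuous (ffun l1 l2 α β) := by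
    unfold ffun lamt; fun_prop
  have hSc : Continuous (sfun l1 l2 α β) := by
    unfold sfun lamt; fun_prop
  have hwc : ContinuousOn (wfun l1 l2 α β) (Set.Icc 0 1) := by
    have hcont : ContinuousOn (fun t =>
        ((efun l1 l2 α β t / sfun l1 l2 α β t : ℝ) : ℂ) +
          Complex.I * ((-ffun l1 l2 α β t / sfun l1 l2 α β t : ℝ) : ℂ)) (Set.Icc 0 1) := by
      apply ContinuousOn.add
      · exact Complex.continuous_ofReal.comp_continuousOn
          (hEc.continuousOn.div hSc.continuousOn (fun t ht => (hS t ht).ne'))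
      · exact continuousOn_const.mul (Complex.continuous_ofReal.comp_continuousOn
          ((hFc.neg.continuousOn).div hSc.continuousOn (fun t ht => (hS t ht).ne')))
    exact hcont.congr (fun t ht => wfun_eq _ _ _ _ _ hαβ (hL1 t ht) (hL2 t ht))
  have harg : ContinuousOn (fun t => (wfun l1 l2 α β t).arg) (Set.Icc 0 1) :=
    fun t ht => (Complex.continuousAt_arg (hslit t ht)).comp_continuousWithinAt (hwc t ht)
  -- the defect function takes values in 2πℤ
  have hint : ∀ t ∈ Set.Icc (0:ℝ) 1, ∃ n : ℤ,
      Φ t - 2 * (wfun l1 l2 α β t).arg = n * (2 * Real.pi) := by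
    intro t ht
    have hw0 : wfun l1 l2 α β t ≠ 0 := Complex.slitPlane_ne_zero (hslit t ht)
    have habs : ((‖wfun l1 l2 α β t‖ : ℝ) : ℂ) ≠ 0 := by
      simp [norm_eq_zero, hw0]
    have hexp : Complex.exp (((wfun l1 l2 α β t).arg : ℂ) * Complex.I)
        = wfun l1 l2 α β t / (‖wfun l1 l2 α β t‖ : ℂ) := by
      rw [eq_div_iff habs, mul_comm]
      have := Complex.norm_mul_exp_arg_mul_I (wfun l1 l2 α β t)
      exact this
    have h2exp : Complex.exp (2 * (((wfun l1 l2 α β t).arg : ℂ) * Complex.I))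
        = (wfun l1 l2 α β t / (‖wfun l1 l2 α β t‖ : ℂ)) ^ 2 := by
      rw [two_mul, Complex.exp_add, hexp, sq]
    have h1 : Complex.exp (Complex.I * (Φ t : ℂ)
        - 2 * (((wfun l1 l2 α β t).arg : ℂ) * Complex.I)) = 1 := by
      rw [Complex.exp_sub, hΦ t ht, h2exp, div_self]
      exact pow_ne_zero _ (div_ne_zero hw0 habs)
    obtain ⟨n, hn⟩ := Complex.exp_eq_one_iff.1 h1
    refine ⟨n, ?_⟩
    have h2 : ((Φ t - 2 * (wfun l1 l2 α β t).arg : ℝ) : ℂ) * Complex.I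
        = (((n : ℝ) * (2 * Real.pi) : ℝ) : ℂ) * Complex.I := by
      push_cast
      linear_combination hn
    have h3 := mul_right_cancel₀ Complex.I_ne_zero h2
    exact_mod_cast h3
  -- value at 0
  have h0mem : (0:ℝ) ∈ Set.Icc (0:ℝ) 1 := by norm_num
  have h1mem : (1:ℝ) ∈ Set.Icc (0:ℝ) 1 := by norm_num
  have hlam0 : ∀ l : ℝ, lamt l 0 = 1 := fun l => by simp [lamt]
  have hw0val : wfun l1 l2 α β 0 = 2 := by
    rw [wfun_eq _ _ _ _ _ hαβ (hL1 0 h0mem) (hL2 0 h0mem)]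
    have hd : α - β ≠ 0 := sub_ne_zero.2 hαβ
    have he : efun l1 l2 α β 0 / sfun l1 l2 α β 0 = 2 := by
      simp only [efun, sfun, hlam0, Real.sqrt_one]
      field_simp
      ring
    have hf : -ffun l1 l2 α β 0 / sfun l1 l2 α β 0 = 0 := by
      simp [ffun, hlam0]
    rw [he, hf]
    simp
  have hg0 : Φ 0 - 2 * (wfun l1 l2 α β 0).arg = 0 := by
    rw [hw0val, hΦ0]
    have : Complex.arg 2 = 0 := by
      rw [Complex.arg_eq_zero_iff]
      norm_num
    rw [this]; ring
  -- defect vanishes at 1 via IVT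
  have hgc : ContinuousOn (fun t => Φ t - 2 * (wfun l1 l2 α β t).arg) (Set.Icc 0 1) :=
    hΦc.sub (continuousOn_const.mul harg)
  have hg1 : Φ 1 - 2 * (wfun l1 l2 α β 1).arg = 0 := by
    obtain ⟨n, hn1⟩ := hint 1 h1mem
    rcases eq_or_ne n 0 with rfl | hn0
    · simpa using hn1
    exfalso
    have hIcc : Set.uIcc (0:ℝ) 1 = Set.Icc 0 1 := Set.uIcc_of_le zero_le_one
    have hiv := intermediate_value_uIcc (f := fun t => Φ t - 2 * (wfun l1 l2 α β t).arg)
      (a := (0:ℝ)) (b := 1) (by rw [hIcc]; exact hgc)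
    have hπ := Real.pi_pos
    -- pick the target value ±π
    rcases hn0.lt_or_gt with hneg | hpos
    · have hn1' : (n : ℝ) ≤ -1 := by
        have h' : n ≤ -1 := by omega
        exact_mod_cast h'
      have hmem : -Real.pi ∈ Set.uIcc (Φ 0 - 2 * (wfun l1 l2 α β 0).arg)
          (Φ 1 - 2 * (wfun l1 l2 α β 1).arg) := by
        rw [hg0, hn1, Set.mem_uIcc]
        right
        constructor
        · nlinarith
        · linarith
      obtain ⟨t, ht, hgt⟩ := hiv hmem
      obtain ⟨m, hm⟩ := hint t (hIcc ▸ ht)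
      replace hgt : Φ t - 2 * (wfun l1 l2 α β t).arg = -Real.pi := hgt
      have h2 : ((2 * m + 1 : ℤ) : ℝ) * Real.pi = 0 := by push_cast; linarith
      rcases mul_eq_zero.1 h2 with h | h
      · have : (2 * m + 1 : ℤ) = 0 := by exact_mod_cast h
        omega
      · linarith
    · have hn1' : (1:ℝ) ≤ (n : ℝ) := by
        have h' : 1 ≤ n := by omega
        exact_mod_cast h'
      have hmem : Real.pi ∈ Set.uIcc (Φ 0 - 2 * (wfun l1 l2 α β 0).arg)
          (Φ 1 - 2 * (wfun l1 l2 α β 1).arg) := by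
        rw [hg0, hn1, Set.mem_uIcc]
        left
        constructor
        · linarith
        · nlinarith
      obtain ⟨t, ht, hgt⟩ := hiv hmem
      obtain ⟨m, hm⟩ := hint t (hIcc ▸ ht)
      replace hgt : Φ t - 2 * (wfun l1 l2 α β t).arg = Real.pi := hgt
      have h2 : ((2 * m - 1 : ℤ) : ℝ) * Real.pi = 0 := by push_cast; linarith
      rcases mul_eq_zero.1 h2 with h | h
      · have : (2 * m - 1 : ℤ) = 0 := by exact_mod_cast h
        omega
      · linarith
  -- conclude: Φ 1 = 2 arg w(1), and arg w(1) ∈ (−π/2, π/2]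
  obtain ⟨hE1, hEF1⟩ := hkey 1 h1mem
  have hS1 := hS 1 h1mem
  have hre1 : 0 ≤ (wfun l1 l2 α β 1).re := by
    rw [wfun_re _ _ _ _ _ hαβ (hL1 1 h1mem) (hL2 1 h1mem)]
    exact div_nonneg hE1 hS1.le
  have habs1 : |(wfun l1 l2 α β 1).arg| ≤ Real.pi / 2 :=
    Complex.abs_arg_le_pi_div_two_iff.2 hre1
  have hnearg : (wfun l1 l2 α β 1).arg ≠ -(Real.pi / 2) := by
    intro h
    obtain ⟨hr0, hi0⟩ := Complex.arg_eq_neg_pi_div_two_iff.1 h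
    rw [wfun_re _ _ _ _ _ hαβ (hL1 1 h1mem) (hL2 1 h1mem)] at hr0
    have hE0 : efun l1 l2 α β 1 = 0 := by
      rcases div_eq_zero_iff.1 hr0 with h' | h'
      · exact h'
      · exact absurd h' hS1.ne'
    have hF := hEF1 hE0
    rw [wfun_im _ _ _ _ _ hαβ (hL1 1 h1mem) (hL2 1 h1mem)] at hi0
    have : 0 < -ffun l1 l2 α β 1 / sfun l1 l2 α β 1 := div_pos (by linarith) hS1
    linarith
  obtain ⟨hlo, hhi⟩ := abs_le.1 habs1
  have hlt : -(Real.pi / 2) < (wfun l1 l2 α β 1).arg := lt_of_le_of_ne hlo (Ne.symm hnearg)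
  have hΦ1 : Φ 1 = 2 * (wfun l1 l2 α β 1).arg := by linarith
  constructor
  · rw [hΦ1]; linarith
  · rw [hΦ1]; linarith
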